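/- Let c > 0, and set q_i = c·(1 + 1/i) for i ∈ [n]. Then ∑_{i=1}^n (q_i - c) = c·H_n, and for every k ∈ [n], (1 - c/q_k)·∑_{i≤k} q_i = c·(k + H_k)/(k+1) ≤ 2c. Hence (∑_i (q_i - c)) / (max_k (1 - c/q_k)·∑_{i≤k} q_i) ≥ H_n / 2, where H_m = ∑_{i=1}^m 1/i. -/

import Mathlib

theorem equal_cost_gap (n : ℕ) (hn : 1 ≤ n) (c : ℝ) (hc : 0 < c)
    (q : ℕ → ℝ) (hq : ∀ i, q i = c * (1 + 1 / (i : ℝ)))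
    (H : ℕ → ℝ) (hH : ∀ m, H m = ∑ i ∈ Finset.Icc 1 m, (1 : ℝ) / i) :
    (∑ i ∈ Finset.Icc 1 n, (q i - c)) = c * H n ∧
    (∀ k ∈ Finset.Icc 1 n,
      (1 - c / q k) * (∑ i ∈ Finset.Icc 1 k, q i) = c * ((k : ℝ) + H k) / ((k : ℝ) + 1) ∧
      (1 - c / q k) * (∑ i ∈ Finset.Icc 1 k, q i) ≤ 2 * c) ∧
    (∑ i ∈ Finset.Icc 1 n, (q i - c)) /
        ((Finset.Icc 1 n).sup' (Finset.nonempty_Icc.mpr hn)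
          (fun k => (1 - c / q k) * (∑ i ∈ Finset.Icc 1 k, q i))) ≥ H n / 2 := by
  have hsum1 : ∀ m : ℕ, (∑ i ∈ Finset.Icc 1 m, (q i - c)) = c * H m := by
    intro m
    rw [hH, Finset.mul_sum]
    apply Finset.sum_congr rfl
    intro i _
    rw [hq i]; ring
  have hsumq : ∀ m : ℕ, (∑ i ∈ Finset.Icc 1 m, q i) = c * ((m : ℝ) + H m) := by
    intro m
    have h1 : (∑ i ∈ Finset.Icc 1 m, q i)
        = (∑ i ∈ Finset.Icc 1 m, (q i - c)) + ∑ _i ∈ Finset.Icc 1 m, c := by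
      rw [← Finset.sum_add_distrib]; simp
    rw [h1, hsum1, Finset.sum_const, Nat.card_Icc]
    simp
    ring
  have hHnonneg : ∀ m : ℕ, 0 ≤ H m := by
    intro m
    rw [hH]
    apply Finset.sum_nonneg
    intro i _; positivity
  have hHle : ∀ m : ℕ, H m ≤ (m : ℝ) := by
    intro m
    rw [hH]
    calc (∑ i ∈ Finset.Icc 1 m, (1 : ℝ) / i) ≤ ∑ i ∈ Finset.Icc 1 m, (1 : ℝ) := by
          apply Finset.sum_le_sum
          intro i hi
          have hi1 : 1 ≤ i := (Finset.mem_Icc.mp hi).1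
          have : (1 : ℝ) ≤ (i : ℝ) := by exact_mod_cast hi1
          rw [div_le_one (by linarith)]; exact this
      _ = (m : ℝ) := by rw [Finset.sum_const, Nat.card_Icc]; simp
  have key : ∀ k ∈ Finset.Icc 1 n,
      (1 - c / q k) * (∑ i ∈ Finset.Icc 1 k, q i) = c * ((k : ℝ) + H k) / ((k : ℝ) + 1) ∧
      (1 - c / q k) * (∑ i ∈ Finset.Icc 1 k, q i) ≤ 2 * c := by
    intro k hk
    have hk1 : 1 ≤ k := (Finset.mem_Icc.mp hk).1
    have hkR : (1 : ℝ) ≤ (k : ℝ) := by exact_mod_cast hk1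
    have hk0 : (k : ℝ) ≠ 0 := by linarith
    have heq : (1 - c / q k) * (∑ i ∈ Finset.Icc 1 k, q i)
        = c * ((k : ℝ) + H k) / ((k : ℝ) + 1) := by
      rw [hq k, hsumq k]
      have h1 : (1 : ℝ) + 1 / (k : ℝ) ≠ 0 := by positivity
      field_simp
      ring
    refine ⟨heq, ?_⟩
    rw [heq, div_le_iff₀ (by linarith)]
    have := hHle k
    nlinarith
  refine ⟨hsum1 n, key, ?_⟩
  set M := (Finset.Icc 1 n).sup' (Finset.nonempty_Icc.mpr hn)
      (fun k => (1 - c / q k) * (∑ i ∈ Finset.Icc 1 k, q i)) with hM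
  have h1mem : 1 ∈ Finset.Icc 1 n := Finset.mem_Icc.mpr ⟨le_refl 1, hn⟩
  have hH1 : H 1 = 1 := by rw [hH]; simp
  have hMge : (1 - c / q 1) * (∑ i ∈ Finset.Icc 1 1, q i) ≤ M :=
    Finset.le_sup' (fun k => (1 - c / q k) * (∑ i ∈ Finset.Icc 1 k, q i)) h1mem
  have hval1 : (1 - c / q 1) * (∑ i ∈ Finset.Icc 1 1, q i) = c := by
    rw [(key 1 h1mem).1, hH1]
    norm_num
  have hMpos : 0 < M := by rw [← hval1] at hc; linarith
  have hM2c : M ≤ 2 * c := Finset.sup'_le _ _ (fun k hk => (key k hk).2)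
  rw [hsum1 n, ge_iff_le, div_le_div_iff₀ (by norm_num) hMpos]
  have := hHnonneg n
  nlinarith
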